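/- Let Q be a positive definite quadratic form on the real vector space ℝ³ (Q(x) > 0 for all x ≠ 0). Then the even Clifford algebra C₀(Q) = CliffordAlgebra.even Q is a division ring (it is isomorphic to Hamilton's quaternions ℍ; this expresses that the quaternion algebra attached to a positive definite ternary form is ramified at the infinite place). -/

import Mathlib

open CliffordAlgebra QuadraticMap

section EvenIso

variable {R M₁ M₂ : Type*} [CommRing R] [AddCommGroup M₁] [AddCommGroup M₂]
  [Module R M₁] [Module R M₂] {Q₁ : QuadraticForm R M₁} {Q₂ : QuadraticForm R M₂}

theorem aux_ι_range_map (e : Q₁.IsometryEquiv Q₂) :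
    (LinearMap.range (ι Q₁)).map (equivOfIsometry e).toAlgHom.toLinearMap
      = LinearMap.range (ι Q₂) := by
  have h : (equivOfIsometry e).toAlgHom = CliffordAlgebra.map e.toIsometry := rfl
  rw [h, ι_range_map_map]
  have hr : LinearMap.range e.toIsometry.toLinearMap = ⊤ :=
    LinearMap.range_eq_top.mpr e.toLinearEquiv.surjective
  rw [hr, Submodule.map_top]

theorem aux_evenOdd_map (e : Q₁.IsometryEquiv Q₂) (n : ZMod 2) :
    (evenOdd Q₁ n).map (equivOfIsometry e).toAlgHom.toLinearMap = evenOdd Q₂ n := by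
  simp_rw [evenOdd, Submodule.map_iSup, Submodule.map_pow, aux_ι_range_map e]

theorem aux_even_map (e : Q₁.IsometryEquiv Q₂) :
    (CliffordAlgebra.even Q₁).map (equivOfIsometry e).toAlgHom
      = CliffordAlgebra.even Q₂ := by
  apply Subalgebra.toSubmodule_injective
  rw [Subalgebra.map_toSubmodule, CliffordAlgebra.even_toSubmodule,
    CliffordAlgebra.even_toSubmodule]
  exact aux_evenOdd_map e 0

/-- The even subalgebras of the Clifford algebras of isometrically equivalent quadratic
forms are isomorphic. -/
noncomputable def evenEquivOfIsometry (e : Q₁.IsometryEquiv Q₂) :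
    CliffordAlgebra.even Q₁ ≃ₐ[R] CliffordAlgebra.even Q₂ :=
  ((equivOfIsometry e).subalgebraMap (CliffordAlgebra.even Q₁)).trans
    (Subalgebra.equivOfEq _ _ (aux_even_map e))

end EvenIso

/-- **Ramification at the infinite place.** The even Clifford algebra of a positive
definite quadratic form on `ℝ³` is a division ring (it is isomorphic to Hamilton's
quaternions `ℍ`): it is a nontrivial ring in which every nonzero element is a unit. -/
theorem even_clifford_posDef_isDivisionRing
    (Q : QuadraticForm ℝ (Fin 3 → ℝ)) (hQ : ∀ x : Fin 3 → ℝ, x ≠ 0 → 0 < Q x) :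
    Nontrivial (CliffordAlgebra.even Q) ∧
      ∀ x : CliffordAlgebra.even Q, x ≠ 0 → IsUnit x := by
  classical
  obtain ⟨w, hw, ⟨e₁⟩⟩ := Q.equivalent_one_zero_neg_one_weighted_sum_squared
  -- all the weights are `1` by positive definiteness
  have hw1 : ∀ i, w i = 1 := by
    intro i
    have h0 : (Pi.single i (1 : ℝ) : Fin (Module.finrank ℝ (Fin 3 → ℝ)) → ℝ) ≠ 0 := by
      intro h
      simpa using congrFun h i
    have hs0 : e₁.symm (Pi.single i (1 : ℝ)) ≠ 0 := by
      intro h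
      apply h0
      have := congrArg e₁ h
      simpa using this
    have hpos : 0 < weightedSumSquares ℝ w (Pi.single i (1 : ℝ)) := by
      have h1 := e₁.map_app (e₁.symm (Pi.single i (1 : ℝ)))
      have h2 : e₁ (e₁.symm (Pi.single i (1 : ℝ))) = Pi.single i (1 : ℝ) :=
        e₁.toLinearEquiv.apply_symm_apply _
      rw [h2] at h1
      rw [h1]
      exact hQ _ hs0
    have hval : weightedSumSquares ℝ w (Pi.single i (1 : ℝ)) = w i := by
      rw [weightedSumSquares_apply]
      rw [Finset.sum_eq_single i]
      · simp
      · intro j _ hj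
        simp [Pi.single_eq_of_ne hj]
      · simp
    rw [hval] at hpos
    rcases hw i with h | h | h
    · rw [h] at hpos; norm_num at hpos
    · rw [h] at hpos; norm_num at hpos
    · exact h
  have hn : Module.finrank ℝ (Fin 3 → ℝ) = 3 := Module.finrank_fin_fun ℝ
  -- the target quadratic form
  set Qq : QuadraticForm ℝ (ℝ × ℝ) := CliffordAlgebraQuaternion.Q (-1 : ℝ) (-1 : ℝ) with hQq
  -- the isometry between the weighted sum of squares and `-(Q' Qq)`
  let L3 : (Fin 3 → ℝ) ≃ₗ[ℝ] (ℝ × ℝ) × ℝ :=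
    { toFun := fun x => ((x 0, x 1), x 2)
      invFun := fun p => ![p.1.1, p.1.2, p.2]
      map_add' := fun x y => rfl
      map_smul' := fun c x => rfl
      left_inv := fun x => by
        funext j
        fin_cases j <;> rfl
      right_inv := fun p => rfl }
  let L : (Fin (Module.finrank ℝ (Fin 3 → ℝ)) → ℝ) ≃ₗ[ℝ] (ℝ × ℝ) × ℝ :=
    (LinearEquiv.funCongrLeft ℝ ℝ (finCongr hn).symm).trans L3
  have e₂ : (weightedSumSquares ℝ w).IsometryEquiv
      (-(CliffordAlgebra.EquivEven.Q' Qq)) :=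
    { L with
      map_app' := by
        intro m
        have hsum : ∑ i, w i • (m i * m i) = ∑ j : Fin 3, m ((finCongr hn).symm j) *
            m ((finCongr hn).symm j) := by
          refine Fintype.sum_equiv (finCongr hn) _ _ fun i => ?_
          rw [hw1 i, one_smul, Equiv.symm_apply_apply]
        show -(CliffordAlgebra.EquivEven.Q' Qq) (L m) = weightedSumSquares ℝ w m
        rw [weightedSumSquares_apply, hsum, Fin.sum_univ_three]
        simp only [QuadraticMap.neg_apply, CliffordAlgebra.EquivEven.Q'_apply, hQq,
          CliffordAlgebraQuaternion.Q_apply, L, L3, LinearEquiv.trans_apply,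
          LinearEquiv.funCongrLeft_apply, LinearEquiv.coe_mk, LinearMap.funLeft_apply,
          Equiv.symm_symm, finCongr_apply]
        change -(-1 * (m ((finCongr hn).symm 0) * m ((finCongr hn).symm 0)) +
          -1 * (m ((finCongr hn).symm 1) * m ((finCongr hn).symm 1)) -
          m ((finCongr hn).symm 2) * m ((finCongr hn).symm 2)) = _
        ring }
  -- assemble the algebra isomorphism with the quaternions
  let E : CliffordAlgebra.even Q ≃ₐ[ℝ] Quaternion ℝ :=
    (evenEquivOfIsometry e₁).trans <| (evenEquivOfIsometry e₂).trans <|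
      (CliffordAlgebra.evenEquivEvenNeg (CliffordAlgebra.EquivEven.Q' Qq)).symm.trans <|
        (CliffordAlgebra.equivEven Qq).symm.trans CliffordAlgebraQuaternion.equiv
  constructor
  · exact E.toEquiv.nontrivial
  · intro x hx
    have h1 : E x ≠ 0 := by
      intro h
      apply hx
      have := congrArg E.symm h
      simpa using this
    have h2 : IsUnit (E x) := isUnit_iff_ne_zero.mpr h1
    have h3 := h2.map E.symm.toAlgHom
    simpa using h3
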